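/- Let A, B be finite nonempty sets of integers with min A = min B = 0, max A = M, max B = N, M ≥ N, |A+B| = |A|+|B|-1+r, h_A = |[0,M]\A| ≤ |B| - 2, and r ≤ |B| - 2 - δ(A,B), where δ(A,B) = 1 if A ⊆ B and 0 otherwise. If x ∈ [0,N] \ B satisfies x ∉ A+B (left stable) and y ∈ [0,N] \ B satisfies y + M ∉ A+B (right stable), then x < y. -/
import Mathlib

open scoped Pointwise
open scoped Classical

theorem stmt7 (A B : Finset ℤ) (hA : A.Nonempty) (hB : B.Nonempty) (M N r : ℤ)
    (hminA : A.min' hA = 0) (hminB : B.min' hB = 0)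
    (hmaxA : A.max' hA = M) (hmaxB : B.max' hB = N) (hMN : N ≤ M)
    (hr : ((A + B).card : ℤ) = (A.card : ℤ) + (B.card : ℤ) - 1 + r)
    (hhole : ((Finset.Icc 0 M \ A).card : ℤ) ≤ (B.card : ℤ) - 2)
    (hrb : r ≤ (B.card : ℤ) - 2 - (if A ⊆ B then 1 else 0))
    (x y : ℤ) (hx : x ∈ Finset.Icc 0 N) (hxB : x ∉ B) (hxL : x ∉ A + B)
    (hy : y ∈ Finset.Icc 0 N) (hyB : y ∉ B) (hyR : y + M ∉ A + B) :
    x < y := by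
  classical
  by_contra hcon
  push_neg at hcon
  -- hcon : y ≤ x
  obtain ⟨hx0, hxN⟩ := Finset.mem_Icc.mp hx
  obtain ⟨hy0, hyN⟩ := Finset.mem_Icc.mp hy
  have h0A : (0:ℤ) ∈ A := by have := A.min'_mem hA; rwa [hminA] at this
  have hMA : M ∈ A := by have := A.max'_mem hA; rwa [hmaxA] at this
  have h0B : (0:ℤ) ∈ B := by have := B.min'_mem hB; rwa [hminB] at this
  have hNB : N ∈ B := by have := B.max'_mem hB; rwa [hmaxB] at this
  have hAmem : ∀ a ∈ A, 0 ≤ a ∧ a ≤ M := fun a ha => by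
    constructor
    · have := A.min'_le a ha; rwa [hminA] at this
    · have := A.le_max' a ha; rwa [hmaxA] at this
  have hBmem : ∀ b ∈ B, 0 ≤ b ∧ b ≤ N := fun b hb => by
    constructor
    · have := B.min'_le b hb; rwa [hminB] at this
    · have := B.le_max' b hb; rwa [hmaxB] at this
  have hM0 : 0 ≤ M := (hAmem M hMA).1
  have hN0 : 0 ≤ N := (hBmem N hNB).1
  have hAsub : A ⊆ Finset.Icc 0 M := fun a ha => Finset.mem_Icc.mpr (hAmem a ha)
  have hBsub : B ⊆ Finset.Icc 0 N := fun b hb => Finset.mem_Icc.mpr (hBmem b hb)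
  have addmem : ∀ {a b : ℤ}, a ∈ A → b ∈ B → a + b ∈ A + B :=
    fun ha hb => Finset.add_mem_add ha hb
  have hABsub : A + B ⊆ Finset.Icc 0 (M + N) := by
    intro z hz
    rcases Finset.mem_add.mp hz with ⟨a, ha, b, hb, rfl⟩
    have h1 := hAmem a ha; have h2 := hBmem b hb
    exact Finset.mem_Icc.mpr ⟨by linarith [h1.1, h2.1], by linarith [h1.2, h2.2]⟩
  have hBin : ∀ b ∈ B, b ∈ A + B := fun b hb => by
    have := addmem h0A hb; rwa [zero_add] at this
  have hAin : ∀ a ∈ A, a ∈ A + B := fun a ha => by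
    have := addmem ha h0B; rwa [add_zero] at this
  have hMBin : ∀ b ∈ B, b + M ∈ A + B := fun b hb => by
    have := addmem hMA hb; rwa [add_comm M b] at this
  -- cardinality of Icc's
  have cardIccM : ((Finset.Icc (0:ℤ) M).card : ℤ) = M + 1 := by
    rw [Int.card_Icc, Int.toNat_of_nonneg (by linarith)]; ring
  have cardIccN : ((Finset.Icc (0:ℤ) N).card : ℤ) = N + 1 := by
    rw [Int.card_Icc, Int.toNat_of_nonneg (by linarith)]; ring
  have cardIccMN : ((Finset.Icc (0:ℤ) (M + N)).card : ℤ) = M + N + 1 := by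
    rw [Int.card_Icc, Int.toNat_of_nonneg (by linarith)]; ring
  set hAZ : ℤ := ((Finset.Icc 0 M \ A).card : ℤ) with hAZdef
  have cardA : (A.card : ℤ) + hAZ = M + 1 := by
    have h1 := Finset.card_sdiff_add_card_eq_card hAsub
    have h2 : ((Finset.Icc (0:ℤ) M \ A).card : ℤ) + (A.card : ℤ)
        = ((Finset.Icc (0:ℤ) M).card : ℤ) := by exact_mod_cast congrArg (Nat.cast (R := ℤ)) h1
    rw [cardIccM] at h2; linarith
  -- Step 1: no hole of A+B in [N, M]
  have noHole : ∀ h : ℤ, N ≤ h → h ≤ M → h ∈ A + B := by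
    intro h hh1 hh2
    by_contra hcontra
    have hsub2 : B.image (fun b => h - b) ⊆ Finset.Icc 0 M \ A := by
      intro u hu
      rcases Finset.mem_image.mp hu with ⟨b, hb, rfl⟩
      have hbm := hBmem b hb
      refine Finset.mem_sdiff.mpr ⟨Finset.mem_Icc.mpr ⟨by linarith [hbm.2], by linarith [hbm.1]⟩, ?_⟩
      intro hua
      have := addmem hua hb
      rw [sub_add_cancel] at this
      exact hcontra this
    have hcard := Finset.card_le_card hsub2
    rw [Finset.card_image_of_injective _ (fun u v huv => by omega)] at hcard
    have h9 : (B.card : ℤ) ≤ ((Finset.Icc 0 M \ A).card : ℤ) := by exact_mod_cast hcard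
    rw [← hAZdef] at h9
    linarith
  -- Step 2: no doubly-stable hole
  have noDouble : ∀ z : ℤ, 0 ≤ z → z ≤ N → z ∉ A + B → z + M ∈ A + B := by
    intro z hz0 hzN hzL
    by_contra hzR
    have hzB : z ∉ B := fun hzB => hzL (hBin z hzB)
    have hLcard : ((B.filter (fun b => b < z)).image (fun b => z - b)).card
        = (B.filter (fun b => b < z)).card :=
      Finset.card_image_of_injective _ (fun u v huv => by omega)
    have hRcard : ((B.filter (fun b => z < b)).image (fun b => z + M - b)).card
        = (B.filter (fun b => z < b)).card :=
      Finset.card_image_of_injective _ (fun u v huv => by omega)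
    have hVsub : ((B.filter (fun b => b < z)).image (fun b => z - b)) ∪
        ((B.filter (fun b => z < b)).image (fun b => z + M - b)) ⊆ Finset.Icc 0 M \ A := by
      intro u hu
      rcases Finset.mem_union.mp hu with h | h
      · rcases Finset.mem_image.mp h with ⟨b, hb, rfl⟩
        obtain ⟨hbB, hbz⟩ := Finset.mem_filter.mp hb
        have hbm := hBmem b hbB
        refine Finset.mem_sdiff.mpr ⟨Finset.mem_Icc.mpr ⟨by linarith, by linarith [hbm.1]⟩, ?_⟩
        intro hua
        have := addmem hua hbB
        rw [sub_add_cancel] at this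
        exact hzL this
      · rcases Finset.mem_image.mp h with ⟨b, hb, rfl⟩
        obtain ⟨hbB, hbz⟩ := Finset.mem_filter.mp hb
        have hbm := hBmem b hbB
        refine Finset.mem_sdiff.mpr ⟨Finset.mem_Icc.mpr ⟨by linarith [hbm.2], by linarith⟩, ?_⟩
        intro hua
        have := addmem hua hbB
        have h2 : z + M - b + b = z + M := by ring
        rw [h2] at this
        exact hzR this
    have hinter : ((B.filter (fun b => b < z)).image (fun b => z - b)) ∩
        ((B.filter (fun b => z < b)).image (fun b => z + M - b)) ⊆ {z} := by
      intro u hu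
      obtain ⟨h1, h2⟩ := Finset.mem_inter.mp hu
      rcases Finset.mem_image.mp h1 with ⟨b1, hb1, e1⟩
      rcases Finset.mem_image.mp h2 with ⟨b2, hb2, e2⟩
      obtain ⟨hb1B, _⟩ := Finset.mem_filter.mp hb1
      obtain ⟨hb2B, _⟩ := Finset.mem_filter.mp hb2
      have hm1 := hBmem b1 hb1B
      have hm2 := hBmem b2 hb2B
      have : u = z := by omega
      simp [this]
    have hunion : B.filter (fun b => b < z) ∪ B.filter (fun b => z < b) = B := by
      ext b
      constructor
      · intro hb
        rcases Finset.mem_union.mp hb with h | h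
        · exact (Finset.mem_filter.mp h).1
        · exact (Finset.mem_filter.mp h).1
      · intro hb
        rcases lt_trichotomy b z with h | h | h
        · exact Finset.mem_union_left _ (Finset.mem_filter.mpr ⟨hb, h⟩)
        · exact absurd (h ▸ hb) hzB
        · exact Finset.mem_union_right _ (Finset.mem_filter.mpr ⟨hb, h⟩)
    have hdisj : Disjoint (B.filter (fun b => b < z)) (B.filter (fun b => z < b)) := by
      rw [Finset.disjoint_left]
      intro b hb1 hb2
      have := (Finset.mem_filter.mp hb1).2
      have := (Finset.mem_filter.mp hb2).2
      omega
    have hBcard : (B.filter (fun b => b < z)).card + (B.filter (fun b => z < b)).card = B.card := by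
      rw [← Finset.card_union_of_disjoint hdisj, hunion]
    have c1 := Finset.card_le_card hVsub
    have c2 := Finset.card_le_card hinter
    have c3 := Finset.card_union_add_card_inter
      ((B.filter (fun b => b < z)).image (fun b => z - b))
      ((B.filter (fun b => z < b)).image (fun b => z + M - b))
    have c4 : ({z} : Finset ℤ).card = 1 := Finset.card_singleton z
    have hfin : B.card ≤ (Finset.Icc 0 M \ A).card + 1 := by omega
    have h9 : (B.card : ℤ) ≤ ((Finset.Icc 0 M \ A).card : ℤ) + 1 := by exact_mod_cast hfin
    rw [← hAZdef] at h9
    linarith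
  -- Step 3: partition identities
  set X := (Finset.Icc (0:ℤ) N).filter (fun z => z ∉ A + B) with hXdef
  set Y := (Finset.Icc (0:ℤ) N).filter (fun z => z + M ∉ A + B) with hYdef
  set K := (Finset.Icc (0:ℤ) N).filter (fun z => z ∉ B ∧ z ∈ A + B ∧ z + M ∈ A + B) with hKdef
  have hpart1 : Finset.Icc (0:ℤ) N \ B = (X ∪ Y) ∪ K := by
    ext z
    simp only [Finset.mem_sdiff, Finset.mem_union, hXdef, hYdef, hKdef, Finset.mem_filter]
    constructor
    · rintro ⟨hzI, hzB⟩
      by_cases h1 : z ∈ A + B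
      · by_cases h2 : z + M ∈ A + B
        · exact Or.inr ⟨hzI, hzB, h1, h2⟩
        · exact Or.inl (Or.inr ⟨hzI, h2⟩)
      · exact Or.inl (Or.inl ⟨hzI, h1⟩)
    · rintro ((⟨hzI, h⟩ | ⟨hzI, h⟩) | ⟨hzI, hzB, _, _⟩)
      · exact ⟨hzI, fun hzB => h (hBin z hzB)⟩
      · exact ⟨hzI, fun hzB => h (hMBin z hzB)⟩
      · exact ⟨hzI, hzB⟩
  have hdisjXY : Disjoint X Y := by
    rw [Finset.disjoint_left]
    intro z hzX hzY
    obtain ⟨hzI, hzL⟩ := Finset.mem_filter.mp hzX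
    obtain ⟨_, hzR⟩ := Finset.mem_filter.mp hzY
    obtain ⟨hz0, hzN⟩ := Finset.mem_Icc.mp hzI
    exact hzR (noDouble z hz0 hzN hzL)
  have hdisjXYK : Disjoint (X ∪ Y) K := by
    rw [Finset.disjoint_left]
    intro z hzXY hzK
    obtain ⟨_, _, hz1, hz2⟩ := Finset.mem_filter.mp hzK
    rcases Finset.mem_union.mp hzXY with h | h
    · exact (Finset.mem_filter.mp h).2 hz1
    · exact (Finset.mem_filter.mp h).2 hz2
  have cardPart1 : (Finset.Icc (0:ℤ) N \ B).card = X.card + Y.card + K.card := by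
    rw [hpart1, Finset.card_union_of_disjoint hdisjXYK, Finset.card_union_of_disjoint hdisjXY]
  have hpart2 : Finset.Icc (0:ℤ) (M + N) \ (A + B) = X ∪ Y.image (fun z => z + M) := by
    ext w
    constructor
    · intro hw
      obtain ⟨hwI, hwAB⟩ := Finset.mem_sdiff.mp hw
      obtain ⟨hw0, hwMN⟩ := Finset.mem_Icc.mp hwI
      by_cases hwN : w ≤ N
      · exact Finset.mem_union_left _ (Finset.mem_filter.mpr ⟨Finset.mem_Icc.mpr ⟨hw0, hwN⟩, hwAB⟩)
      · push_neg at hwN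
        have hwM : M < w := by
          by_contra hwM
          push_neg at hwM
          exact hwAB (noHole w (le_of_lt hwN) hwM)
        refine Finset.mem_union_right _ (Finset.mem_image.mpr ⟨w - M, ?_, by ring⟩)
        refine Finset.mem_filter.mpr ⟨Finset.mem_Icc.mpr ⟨by linarith, by linarith⟩, ?_⟩
        have h2 : w - M + M = w := by ring
        rw [h2]
        exact hwAB
    · intro hw
      rcases Finset.mem_union.mp hw with h | h
      · obtain ⟨hzI, hzL⟩ := Finset.mem_filter.mp h
        obtain ⟨hz0, hzN⟩ := Finset.mem_Icc.mp hzI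
        exact Finset.mem_sdiff.mpr ⟨Finset.mem_Icc.mpr ⟨hz0, by linarith⟩, hzL⟩
      · rcases Finset.mem_image.mp h with ⟨z, hzY, rfl⟩
        obtain ⟨hzI, hzR⟩ := Finset.mem_filter.mp hzY
        obtain ⟨hz0, hzN⟩ := Finset.mem_Icc.mp hzI
        exact Finset.mem_sdiff.mpr ⟨Finset.mem_Icc.mpr ⟨by linarith, by linarith⟩, hzR⟩
  have hdisjP2 : Disjoint X (Y.image (fun z => z + M)) := by
    rw [Finset.disjoint_left]
    intro w hwX hwY
    rcases Finset.mem_image.mp hwY with ⟨z, hzY, rfl⟩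
    obtain ⟨hzI, hzR⟩ := Finset.mem_filter.mp hzY
    obtain ⟨hz0, hzN⟩ := Finset.mem_Icc.mp hzI
    obtain ⟨hwI, _⟩ := Finset.mem_filter.mp hwX
    obtain ⟨_, hwN⟩ := Finset.mem_Icc.mp hwI
    have hz00 : z = 0 := by omega
    rw [hz00, zero_add] at hzR
    exact hzR (noHole M hMN le_rfl)
  have cardPart2 : (Finset.Icc (0:ℤ) (M + N) \ (A + B)).card = X.card + Y.card := by
    rw [hpart2, Finset.card_union_of_disjoint hdisjP2,
      Finset.card_image_of_injective _ (add_left_injective M)]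
  have cardB' : (B.card : ℤ) + ((X.card : ℤ) + (Y.card : ℤ) + (K.card : ℤ)) = N + 1 := by
    have h1 := Finset.card_sdiff_add_card_eq_card hBsub
    rw [cardPart1] at h1
    have h2 : ((X.card + Y.card + K.card : ℕ) : ℤ) + (B.card : ℤ)
        = ((Finset.Icc (0:ℤ) N).card : ℤ) := by exact_mod_cast congrArg (Nat.cast (R := ℤ)) h1
    rw [cardIccN] at h2
    push_cast at h2
    linarith
  have cardAB' : ((A + B).card : ℤ) + ((X.card : ℤ) + (Y.card : ℤ)) = M + N + 1 := by
    have h1 := Finset.card_sdiff_add_card_eq_card hABsub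
    rw [cardPart2] at h1
    have h2 : ((X.card + Y.card : ℕ) : ℤ) + ((A + B).card : ℤ)
        = ((Finset.Icc (0:ℤ) (M + N)).card : ℤ) := by exact_mod_cast congrArg (Nat.cast (R := ℤ)) h1
    rw [cardIccMN] at h2
    push_cast at h2
    linarith
  have hrK : r = hAZ + (K.card : ℤ) := by linarith
  have I2 : hAZ + (K.card : ℤ) ≤ (B.card : ℤ) - 2 - (if A ⊆ B then 1 else 0) := by
    rw [← hrK]; exact hrb
  -- Step 4: minimal bad pair
  have hPex : ∃ n : ℕ, ∃ p q : ℤ, (0 ≤ p ∧ p ≤ N ∧ p ∉ A + B) ∧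
      (0 ≤ q ∧ q ≤ N ∧ q + M ∉ A + B) ∧ q ≤ p ∧ p - q = (n : ℤ) := by
    refine ⟨(x - y).toNat, x, y, ⟨hx0, hxN, hxL⟩, ⟨hy0, hyN, hyR⟩, hcon, ?_⟩
    rw [Int.toNat_of_nonneg (by linarith)]
  obtain ⟨p, q, ⟨hp0, hpN, hpL⟩, ⟨hq0, hqN, hqR⟩, hqp, hpq⟩ := Nat.find_spec hPex
  have hmin : ∀ m : ℕ, m < Nat.find hPex → ¬ (∃ p q : ℤ, (0 ≤ p ∧ p ≤ N ∧ p ∉ A + B) ∧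
      (0 ≤ q ∧ q ≤ N ∧ q + M ∉ A + B) ∧ q ≤ p ∧ p - q = (m : ℤ)) :=
    fun m hm => Nat.find_min hPex hm
  set s : ℤ := p - q with hsdef
  set d : ℤ := q + M - p with hddef
  have hpB : p ∉ B := fun h => hpL (hBin p h)
  have hqB : q ∉ B := fun h => hqR (hMBin q h)
  have hs0 : 0 ≤ s := by omega
  have hs1 : 1 ≤ s := by
    rcases eq_or_lt_of_le hs0 with h | h
    · exfalso
      have hpq2 : p = q := by omega
      exact hqR (hpq2 ▸ noDouble p hp0 hpN hpL)
    · omega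
  -- (a): interior non-B elements are in K
  have ha : ∀ z : ℤ, q < z → z < p → z ∉ B → z ∈ K := by
    intro z h1 h2 hzB
    have hz0 : 0 ≤ z := by linarith
    have hzN : z ≤ N := by linarith
    have hzAB : z ∈ A + B := by
      by_contra hzL
      have hlt : (z - q).toNat < Nat.find hPex := by
        have h3 : ((z - q).toNat : ℤ) = z - q := Int.toNat_of_nonneg (by linarith)
        omega
      exact hmin _ hlt ⟨z, q, ⟨hz0, hzN, hzL⟩, ⟨hq0, hqN, hqR⟩, le_of_lt h1,
        (Int.toNat_of_nonneg (by linarith)).symm⟩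
    have hzMAB : z + M ∈ A + B := by
      by_contra hzR
      have hlt : (p - z).toNat < Nat.find hPex := by
        have h3 : ((p - z).toNat : ℤ) = p - z := Int.toNat_of_nonneg (by linarith)
        omega
      exact hmin _ hlt ⟨p, z, ⟨hp0, hpN, hpL⟩, ⟨hz0, hzN, hzR⟩, le_of_lt h2,
        (Int.toNat_of_nonneg (by linarith)).symm⟩
    exact Finset.mem_filter.mpr ⟨Finset.mem_Icc.mpr ⟨hz0, hzN⟩, hzB, hzAB, hzMAB⟩
  -- (b): the main hole count
  set Bd := B.filter (fun b => b + d ∈ B) with hBddef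
  set F := B.filter (fun b => b < p ∧ q < b) with hFdef
  have hLcard : ((B.filter (fun b => b < p)).image (fun b => p - b)).card
      = (B.filter (fun b => b < p)).card :=
    Finset.card_image_of_injective _ (fun u v huv => by omega)
  have hRcard : ((B.filter (fun b => q < b)).image (fun b => q + M - b)).card
      = (B.filter (fun b => q < b)).card :=
    Finset.card_image_of_injective _ (fun u v huv => by omega)
  have hVsub : ((B.filter (fun b => b < p)).image (fun b => p - b)) ∪
      ((B.filter (fun b => q < b)).image (fun b => q + M - b)) ⊆ Finset.Icc 0 M \ A := by
    intro u hu
    rcases Finset.mem_union.mp hu with h | h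
    · rcases Finset.mem_image.mp h with ⟨b, hb, rfl⟩
      obtain ⟨hbB, hbp⟩ := Finset.mem_filter.mp hb
      have hbm := hBmem b hbB
      refine Finset.mem_sdiff.mpr ⟨Finset.mem_Icc.mpr ⟨by linarith, by linarith [hbm.1]⟩, ?_⟩
      intro hua
      have := addmem hua hbB
      rw [sub_add_cancel] at this
      exact hpL this
    · rcases Finset.mem_image.mp h with ⟨b, hb, rfl⟩
      obtain ⟨hbB, hbq⟩ := Finset.mem_filter.mp hb
      have hbm := hBmem b hbB
      refine Finset.mem_sdiff.mpr ⟨Finset.mem_Icc.mpr ⟨by linarith [hbm.2], by linarith⟩, ?_⟩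
      intro hua
      have := addmem hua hbB
      have h2 : q + M - b + b = q + M := by ring
      rw [h2] at this
      exact hqR this
  have hinter : ((B.filter (fun b => b < p)).image (fun b => p - b)) ∩
      ((B.filter (fun b => q < b)).image (fun b => q + M - b)) ⊆ Bd.image (fun b => p - b) := by
    intro u hu
    obtain ⟨h1, h2⟩ := Finset.mem_inter.mp hu
    rcases Finset.mem_image.mp h1 with ⟨b1, hb1, e1⟩
    rcases Finset.mem_image.mp h2 with ⟨b2, hb2, e2⟩
    obtain ⟨hb1B, _⟩ := Finset.mem_filter.mp hb1
    obtain ⟨hb2B, _⟩ := Finset.mem_filter.mp hb2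
    have hb12 : b1 + d = b2 := by omega
    exact Finset.mem_image.mpr ⟨b1, Finset.mem_filter.mpr ⟨hb1B, hb12 ▸ hb2B⟩, e1⟩
  have hBdIcc : Bd ⊆ Finset.Icc 0 s := by
    intro b hb
    obtain ⟨hbB, hbd⟩ := Finset.mem_filter.mp hb
    have h1 := hBmem b hbB
    have h2 := hBmem _ hbd
    exact Finset.mem_Icc.mpr ⟨h1.1, by omega⟩
  have hunionB : B.filter (fun b => b < p) ∪ B.filter (fun b => q < b) = B := by
    ext b
    constructor
    · intro hb
      rcases Finset.mem_union.mp hb with h | h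
      · exact (Finset.mem_filter.mp h).1
      · exact (Finset.mem_filter.mp h).1
    · intro hb
      rcases lt_trichotomy b p with h | h | h
      · exact Finset.mem_union_left _ (Finset.mem_filter.mpr ⟨hb, h⟩)
      · exact absurd (h ▸ hb) hpB
      · exact Finset.mem_union_right _ (Finset.mem_filter.mpr ⟨hb, by omega⟩)
  have hinterB : B.filter (fun b => b < p) ∩ B.filter (fun b => q < b) = F := by
    rw [hFdef, Finset.filter_and]
  have hpartB : (B.filter (fun b => b < p)).card + (B.filter (fun b => q < b)).card
      = B.card + F.card := by
    have := Finset.card_union_add_card_inter (B.filter (fun b => b < p)) (B.filter (fun b => q < b))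
    rw [hunionB, hinterB] at this
    omega
  have I1 : (B.card : ℤ) + (F.card : ℤ) ≤ hAZ + (Bd.card : ℤ) := by
    have c1 := Finset.card_le_card hVsub
    have c2 := Finset.card_le_card hinter
    have c3 := Finset.card_union_add_card_inter
      ((B.filter (fun b => b < p)).image (fun b => p - b))
      ((B.filter (fun b => q < b)).image (fun b => q + M - b))
    have c4 : (Bd.image (fun b => p - b)).card = Bd.card :=
      Finset.card_image_of_injective _ (fun u v huv => by omega)
    have hfin : B.card + F.card ≤ (Finset.Icc 0 M \ A).card + Bd.card := by omega
    have h9 : (B.card : ℤ) + (F.card : ℤ) ≤ ((Finset.Icc 0 M \ A).card : ℤ) + (Bd.card : ℤ) := by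
      exact_mod_cast hfin
    rw [← hAZdef] at h9
    exact h9
  have cardIccS : ((Finset.Icc (0:ℤ) s).card : ℤ) = s + 1 := by
    rw [Int.card_Icc, Int.toNat_of_nonneg (by linarith)]; ring
  have I3 : (Bd.card : ℤ) ≤ s + 1 := by
    have := Finset.card_le_card hBdIcc
    have h2 : (Bd.card : ℤ) ≤ ((Finset.Icc (0:ℤ) s).card : ℤ) := by exact_mod_cast this
    linarith
  have hIoo : Finset.Ioo q p ⊆ F ∪ K := by
    intro z hz
    obtain ⟨h1, h2⟩ := Finset.mem_Ioo.mp hz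
    by_cases hzB : z ∈ B
    · exact Finset.mem_union_left _ (Finset.mem_filter.mpr ⟨hzB, h2, h1⟩)
    · exact Finset.mem_union_right _ (ha z h1 h2 hzB)
  have cardIoo : ((Finset.Ioo q p).card : ℤ) = s - 1 := by
    rw [Int.card_Ioo, Int.toNat_of_nonneg (by omega)]
    try omega
  have I4 : s - 1 ≤ (F.card : ℤ) + (K.card : ℤ) := by
    have c1 := Finset.card_le_card hIoo
    have c2 := Finset.card_union_le F K
    have hfin : (Finset.Ioo q p).card ≤ F.card + K.card := le_trans c1 c2
    have h2 : ((Finset.Ioo q p).card : ℤ) ≤ (F.card : ℤ) + (K.card : ℤ) := by exact_mod_cast hfin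
    linarith
  -- final arithmetic
  by_cases hABs : A ⊆ B
  · rw [if_pos hABs] at I2
    linarith
  · rw [if_neg hABs] at I2
    have hc : (Bd.card : ℤ) = s + 1 := le_antisymm I3 (by linarith)
    have hfk : (F.card : ℤ) + (K.card : ℤ) = s - 1 := le_antisymm (by linarith) I4
    have hBdEq : Bd = Finset.Icc 0 s := by
      refine Finset.eq_of_subset_of_card_le hBdIcc ?_
      have : ((Finset.Icc (0:ℤ) s).card : ℤ) ≤ (Bd.card : ℤ) := by rw [cardIccS, hc]
      exact_mod_cast this
    have hMB : M ∈ B := by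
      have hsBd : s ∈ Bd := by
        rw [hBdEq]; exact Finset.mem_Icc.mpr ⟨hs0, le_refl s⟩
      obtain ⟨_, hsd⟩ := Finset.mem_filter.mp hsBd
      have h2 : s + d = M := by omega
      rwa [h2] at hsd
    have hMNeq : M = N := le_antisymm (hBmem M hMB).2 hMN
    have hdisjFK : Disjoint F K := by
      rw [Finset.disjoint_left]
      intro z hzF hzK
      exact (Finset.mem_filter.mp hzK).2.1 (Finset.mem_filter.mp hzF).1
    have hIooEq : Finset.Ioo q p = F ∪ K := by
      refine Finset.eq_of_subset_of_card_le hIoo ?_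
      have h1 : ((F ∪ K).card : ℤ) = s - 1 := by
        rw [Finset.card_union_of_disjoint hdisjFK]
        push_cast
        linarith
      have : ((F ∪ K).card : ℤ) ≤ ((Finset.Ioo q p).card : ℤ) := by rw [h1, cardIoo]
      exact_mod_cast this
    obtain ⟨a₀, ha₀A, ha₀B⟩ := Finset.not_subset.mp hABs
    have ha₀m := hAmem a₀ ha₀A
    have ha₀K : a₀ ∈ K :=
      Finset.mem_filter.mpr ⟨Finset.mem_Icc.mpr ⟨ha₀m.1, by omega⟩, ha₀B,
        hAin a₀ ha₀A, addmem ha₀A hMB⟩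
    have ha₀Ioo : a₀ ∈ Finset.Ioo q p := by
      rw [hIooEq]; exact Finset.mem_union_right F ha₀K
    obtain ⟨hq1, hp1⟩ := Finset.mem_Ioo.mp ha₀Ioo
    have hpa : p - a₀ ∈ Bd := by
      rw [hBdEq]; exact Finset.mem_Icc.mpr ⟨by linarith, by omega⟩
    have hpaB : p - a₀ ∈ B := (Finset.mem_filter.mp hpa).1
    have : a₀ + (p - a₀) ∈ A + B := addmem ha₀A hpaB
    rw [add_sub_cancel] at this
    exact hpL this
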